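/- arXiv:2405.08956 — 5 statements merged into one kernel-verified Lean document; each statement's English description precedes it below -/
import Mathlib

section
/- The Schulze method is Condorcet-consistent: if c is a Condorcet winner of an election (C,V), then c is the unique Schulze winner. -/
/-- A vote: a strict linear order on candidates, encoded by an injective ranking
(smaller rank = more preferred). -/
structure Vote (C : Type*) where
  rk : C → ℕ
  inj : Function.Injective rk

namespace Vote

/-- `v.Prefers c d` means the voter ranks `c` strictly above `d`. -/
def Prefers {C : Type*} (v : Vote C) (c d : C) : Prop := v.rk c < v.rk d

instance {C : Type*} (v : Vote C) : DecidableRel v.Prefers :=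
  fun c d => inferInstanceAs (Decidable (v.rk c < v.rk d))

end Vote

/-- `Ncount V c d`: the number of votes in `V` ranking `c` above `d`. -/
def Ncount {C : Type*} (V : List (Vote C)) (c d : C) : ℕ :=
  V.countP (fun v => decide (v.Prefers c d))

/-- The pairwise margin `D(c,d) = N(c,d) - N(d,c)`. -/
def margin {C : Type*} (V : List (Vote C)) (c d : C) : ℤ :=
  (Ncount V c d : ℤ) - (Ncount V d c : ℤ)

/-- `l` is a directed path from `c` to `d` using only vertices in `A`
(a list of at least two vertices starting at `c` and ending at `d`). -/
def IsPathOn {C : Type*} (A : Set C) (c d : C) (l : List C) : Prop :=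
  2 ≤ l.length ∧ l.head? = some c ∧ l.getLast? = some d ∧ ∀ x ∈ l, x ∈ A

/-- The strength of a path: the minimum margin along its consecutive edges. -/
def pathStrength {C : Type*} (D : C → C → ℤ) (l : List C) : ℤ :=
  (((l.zip l.tail).map fun p => D p.1 p.2).min?).getD 0

/-- The set of strengths of paths from `c` to `d` within `A`. -/
def strengths {C : Type*} (A : Set C) (D : C → C → ℤ) (c d : C) : Set ℤ :=
  {s | ∃ l : List C, IsPathOn A c d l ∧ pathStrength D l = s}

/-- `P(c,d)`: the strength of a strongest path from `c` to `d` within `A`. -/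
noncomputable def strongestPath {C : Type*} (A : Set C) (D : C → C → ℤ) (c d : C) : ℤ :=
  sSup (strengths A D c d)

/-- `c` is a Schulze winner among candidates `A` w.r.t. margins `D`. -/
def SchulzeWinnerOn {C : Type*} (A : Set C) (D : C → C → ℤ) (c : C) : Prop :=
  c ∈ A ∧ ∀ d ∈ A, d ≠ c → strongestPath A D d c ≤ strongestPath A D c d

/-- `c` is a Condorcet winner among candidates `A` for the votes `V`. -/
def CondorcetWinnerOn {C : Type*} (A : Set C) (V : List (Vote C)) (c : C) : Prop :=
  c ∈ A ∧ ∀ d ∈ A, d ≠ c → 0 < margin V c d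


section Aux

variable {C : Type*}

private lemma int_min?_spec (l : List ℤ) (h : l ≠ []) :
    ∃ m, l.min? = some m ∧ m ∈ l ∧ ∀ b ∈ l, m ≤ b := by
  cases hm : l.min? with
  | none => rw [List.min?_eq_none_iff] at hm; exact absurd hm h
  | some m =>
    rw [List.min?_eq_some_iff] at hm
    exact ⟨m, rfl, hm.1, hm.2⟩

private lemma pathStrength_pair (D : C → C → ℤ) (c d : C) :
    pathStrength D [c, d] = D c d := rfl

private lemma pathStrength_le_of_edge {D : C → C → ℤ} {l : List C} {x y : C}
    (h : (x, y) ∈ l.zip l.tail) : pathStrength D l ≤ D x y := by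
  have hmem : D x y ∈ (l.zip l.tail).map fun p => D p.1 p.2 :=
    List.mem_map_of_mem h
  obtain ⟨m, hm, _, hle⟩ := int_min?_spec _ (List.ne_nil_of_mem hmem)
  rw [pathStrength, hm]
  exact hle _ hmem

private lemma exists_last_edge (c : C) : ∀ (l : List C), 2 ≤ l.length →
    l.getLast? = some c → ∃ x, (x, c) ∈ l.zip l.tail
  | [], h, _ => by simp at h
  | [_], h, _ => by simp at h
  | [a, b], _, h => by
      simp only [List.getLast?, Option.some.injEq] at h
      subst h
      exact ⟨a, by simp⟩
  | a :: b :: y :: t, _, h => by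
      obtain ⟨x, hx⟩ := exists_last_edge c (b :: y :: t) (by simp) (by
        rwa [List.getLast?_cons_cons] at h)
      exact ⟨x, List.mem_cons_of_mem _ hx⟩

private lemma exists_first_edge (c : C) : ∀ (l : List C), 2 ≤ l.length →
    l.head? = some c → ∃ x, (c, x) ∈ l.zip l.tail
  | [], h, _ => by simp at h
  | [_], h, _ => by simp at h
  | a :: b :: t, _, h => by
      simp only [List.head?, Option.some.injEq] at h
      subst h
      exact ⟨b, by simp⟩

private lemma strengths_nonempty (D : C → C → ℤ) (c d : C) :
    (strengths Set.univ D c d).Nonempty :=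
  ⟨D c d, [c, d], ⟨by simp, by simp, by simp, by simp⟩, pathStrength_pair D c d⟩

private lemma strengths_bddAbove [Fintype C] [Nonempty C] (D : C → C → ℤ) (c d : C) :
    BddAbove (strengths Set.univ D c d) := by
  refine ⟨Finset.univ.sup' Finset.univ_nonempty (fun p : C × C => D p.1 p.2), ?_⟩
  rintro s ⟨l, ⟨hlen, hhead, _, _⟩, rfl⟩
  obtain ⟨x, hx⟩ := exists_first_edge c l hlen hhead
  exact (pathStrength_le_of_edge hx).trans
    (Finset.le_sup' (fun p : C × C => D p.1 p.2) (Finset.mem_univ (c, x)))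

end Aux

/-- Schulze is Condorcet-consistent: a Condorcet winner is the unique Schulze winner. -/
theorem schulze_condorcet_consistent {C : Type*} [Fintype C]
    (V : List (Vote C)) (c : C)
    (hc : ∀ d : C, d ≠ c → 0 < margin V c d) :
    SchulzeWinnerOn Set.univ (margin V) c ∧
      ∀ d : C, SchulzeWinnerOn Set.univ (margin V) d → d = c := by
  have hanti : ∀ x y : C, margin V x y = -(margin V y x) := by
    intro x y; unfold margin; ring
  haveI : Nonempty C := ⟨c⟩
  -- every path into c has nonpositive strength
  have hkey1 : ∀ d : C, strongestPath Set.univ (margin V) d c ≤ 0 := by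
    intro d
    apply csSup_le (strengths_nonempty _ d c)
    rintro s ⟨l, ⟨hlen, _, hlast, _⟩, rfl⟩
    obtain ⟨x, hx⟩ := exists_last_edge c l hlen hlast
    refine (pathStrength_le_of_edge hx).trans ?_
    by_cases hxc : x = c
    · subst hxc; simp [margin]
    · rw [hanti x c]
      have := hc x hxc
      omega
  have hkey2 : ∀ d : C, d ≠ c → 0 < strongestPath Set.univ (margin V) c d := by
    intro d hd
    have hmem : margin V c d ∈ strengths Set.univ (margin V) c d :=
      ⟨[c, d], ⟨by simp, by simp, by simp, by simp⟩, pathStrength_pair _ c d⟩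
    exact lt_of_lt_of_le (hc d hd) (le_csSup (strengths_bddAbove _ c d) hmem)
  constructor
  · exact ⟨Set.mem_univ c, fun d _ hd => (hkey1 d).trans (hkey2 d hd).le⟩
  · intro d hd
    by_contra hdc
    have := hd.2 c (Set.mem_univ c) (fun h => hdc h.symm)
    have h2 := hkey2 d hdc
    have h1 := hkey1 d
    omega
end

section
/- The Schulze method is insensitive to bottom-ranked candidates: given an election (C,V) and a new candidate x ∉ C, the Schulze winners of (C,V) equal the Schulze winners of (C ∪ {x}, V^x) intersected with C, and moreover x is never a Schulze winner of (C ∪ {x}, V^x) when V is nonempty; here V^x is obtained from V by appending x at the bottom of every vote. -/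
namespace SchulzeAux
variable {C : Type*}

lemma min?_getD_le {l : List ℤ} {a : ℤ} (h : a ∈ l) (k : ℤ) : l.min?.getD k ≤ a := by
  induction l with
  | nil => simp at h
  | cons b t ih =>
    rw [List.min?_cons]
    rcases List.mem_cons.mp h with rfl | h
    · cases ht : t.min? <;> simp [ht, min_le_left]
    · cases ht : t.min? with
      | none => simp [List.min?_eq_none_iff.mp ht] at h
      | some m =>
        have := ih h
        rw [ht] at this
        simp only [Option.getD_some] at this
        simpa using le_trans (min_le_right b m) this

lemma pathStrength_pair (D : C → C → ℤ) (a b : C) : pathStrength D [a, b] = D a b := by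
  simp [pathStrength, List.min?]

lemma pathStrength_cons (D : C → C → ℤ) (a b : C) (t : List C) (ht : t ≠ []) :
    pathStrength D (a :: b :: t) = min (D a b) (pathStrength D (b :: t)) := by
  have hz : ((b :: t).zip t).map (fun p => D p.1 p.2) ≠ [] := by
    cases t <;> simp_all
  simp only [pathStrength, List.tail_cons, List.zip_cons_cons, List.map_cons, List.min?_cons]
  cases h : (((b :: t).zip t).map fun p => D p.1 p.2).min? with
  | none => exact absurd (List.min?_eq_none_iff.mp h) hz
  | some m => simp

lemma pathStrength_le_edge {D : C → C → ℤ} {l : List C} {a b : C}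
    (h : (a, b) ∈ l.zip l.tail) : pathStrength D l ≤ D a b :=
  min?_getD_le (List.mem_map_of_mem (f := fun p : C × C => D p.1 p.2) h) 0

lemma edge_exists {l : List C} (hl : 2 ≤ l.length) :
    ∃ a b, (a, b) ∈ l.zip l.tail := by
  match l with
  | a :: b :: t => exact ⟨a, b, by simp⟩

end SchulzeAux
namespace SchulzeAux
variable {C : Type*}

lemma margin_le (V : List (Vote C)) (c d : C) : margin V c d ≤ V.length := by
  have h1 : Ncount V c d ≤ V.length := List.countP_le_length
  have : (0 : ℤ) ≤ Ncount V d c := Int.ofNat_nonneg _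
  unfold margin; omega

lemma neg_le_margin (V : List (Vote C)) (c d : C) : -(V.length : ℤ) ≤ margin V c d := by
  have h1 : Ncount V d c ≤ V.length := List.countP_le_length
  have : (0 : ℤ) ≤ Ncount V c d := Int.ofNat_nonneg _
  unfold margin; omega

lemma Ncount_x_eq_zero {x : C} {V : List (Vote C)}
    (hx : ∀ v ∈ V, ∀ c : C, c ≠ x → v.Prefers c x)
    {b : C} (hb : b ≠ x) : Ncount V x b = 0 := by
  rw [Ncount, List.countP_eq_zero]
  intro v hv
  have := hx v hv b hb
  simp only [Vote.Prefers, decide_eq_true_eq] at this ⊢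
  exact fun h => absurd (of_decide_eq_true h) (by omega)

lemma Ncount_bx_eq_length {x : C} {V : List (Vote C)}
    (hx : ∀ v ∈ V, ∀ c : C, c ≠ x → v.Prefers c x)
    {b : C} (hb : b ≠ x) : Ncount V b x = V.length := by
  rw [Ncount, List.countP_eq_length]
  intro v hv
  simpa using hx v hv b hb

lemma margin_cx {x : C} {V : List (Vote C)}
    (hx : ∀ v ∈ V, ∀ c : C, c ≠ x → v.Prefers c x)
    {c : C} (hc : c ≠ x) : margin V c x = V.length := by
  rw [margin, Ncount_x_eq_zero hx hc, Ncount_bx_eq_length hx hc]; simp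

lemma margin_xc {x : C} {V : List (Vote C)}
    (hx : ∀ v ∈ V, ∀ c : C, c ≠ x → v.Prefers c x)
    {c : C} (hc : c ≠ x) : margin V x c = -(V.length : ℤ) := by
  rw [margin, Ncount_x_eq_zero hx hc, Ncount_bx_eq_length hx hc]; simp

lemma margin_self {V : List (Vote C)} (c : C) : margin V c c = 0 := by simp [margin]

lemma margin_x_le {x : C} {V : List (Vote C)}
    (hx : ∀ v ∈ V, ∀ c : C, c ≠ x → v.Prefers c x)
    (a b : C) : margin V x b ≤ margin V a b := by
  by_cases hb : b = x
  · subst hb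
    rw [margin_self]
    by_cases ha : a = b
    · simp [ha, margin_self]
    · rw [margin_cx hx ha]; exact_mod_cast Int.ofNat_nonneg _
  · rw [margin_xc hx hb]; exact neg_le_margin V a b

end SchulzeAux

namespace SchulzeAux
variable {C : Type*}

lemma exists_departure {x d : C} :
    ∀ l : List C, l.head? = some x → l.getLast? = some d → d ≠ x →
      ∃ b, b ≠ x ∧ (x, b) ∈ l.zip l.tail := by
  intro l
  induction l with
  | nil => simp
  | cons a t ih =>
    intro hh hl hd
    simp only [List.head?_cons, Option.some_inj] at hh
    match t, hl with
    | [], hl =>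
      simp only [List.getLast?_singleton, Option.some_inj] at hl
      rw [← hh] at hd
      exact absurd hl.symm hd
    | b :: t', hl =>
      rw [List.getLast?_cons_cons] at hl
      by_cases hb : b = x
      · obtain ⟨b', hb', hmem⟩ := ih (by rw [List.head?_cons, hb]) hl hd
        refine ⟨b', hb', ?_⟩
        rw [hh]
        simpa using Or.inr hmem
      · exact ⟨b, hb, by rw [hh]; simp⟩

lemma elim_x {x : C} (D : C → C → ℤ) (hD : ∀ a b, D x b ≤ D a b) :
    ∀ n (t : List C) (c d : C), t.length ≤ n → t ≠ [] →
      (c :: t).getLast? = some d → c ≠ x → d ≠ x →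
      ∃ l', IsPathOn {y : C | y ≠ x} c d l' ∧ pathStrength D (c :: t) ≤ pathStrength D l' := by
  intro n
  induction n with
  | zero => intro t c d hn hne; exact absurd (List.length_eq_zero_iff.mp (Nat.le_zero.mp hn)) hne
  | succ n ih =>
    intro t c d hn hne hl hc hd
    match t, hne with
    | [b], _ =>
      rw [List.getLast?_cons_cons, List.getLast?_singleton] at hl
      have hbd : b = d := Option.some_inj.mp hl
      refine ⟨[c, b], ⟨by simp, by simp, by simpa using hbd, ?_⟩, le_refl _⟩
      intro y hy
      rcases List.mem_cons.mp hy with rfl | hy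
      · exact hc
      · have : y = b := by simpa using hy
        subst this; rw [hbd]; exact hd
    | b :: e :: t', _ =>
      rw [List.getLast?_cons_cons] at hl
      by_cases hbx : b = x
      · -- drop b: path c :: e :: t'
        rw [List.getLast?_cons_cons] at hl
        have hstep : pathStrength D (c :: b :: e :: t') ≤ pathStrength D (c :: e :: t') := by
          match t' with
          | [] =>
            rw [pathStrength_cons D c b [e] (by simp), pathStrength_pair, pathStrength_pair]
            refine le_trans (min_le_right _ _) ?_
            rw [hbx]; exact hD c e
          | f :: t'' =>
            rw [pathStrength_cons D c b (e :: f :: t'') (by simp),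
              pathStrength_cons D b e (f :: t'') (by simp),
              pathStrength_cons D c e (f :: t'') (by simp)]
            refine le_min ?_ ?_
            · refine le_trans (le_trans (min_le_right _ _) (min_le_left _ _)) ?_
              rw [hbx]; exact hD c e
            · exact le_trans (min_le_right _ _) (min_le_right _ _)
        obtain ⟨l', hp', hs'⟩ := ih (e :: t') c d (by simp at hn ⊢; omega) (by simp)
          (by rw [List.getLast?_cons_cons]; exact hl) hc hd
        exact ⟨l', hp', le_trans hstep hs'⟩
      · -- keep b, recurse on b :: e :: t'
        obtain ⟨l', hp', hs'⟩ := ih (e :: t') b d (by simp at hn ⊢; omega) (by simp)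
          (by rw [List.getLast?_cons_cons]; exact hl) hbx hd
        obtain ⟨hlen', hh', hl', hmem'⟩ := hp'
        match l', hlen', hh' with
        | b' :: e' :: t'', _, hh' =>
          simp only [List.head?_cons, Option.some_inj] at hh'
          refine ⟨c :: b' :: e' :: t'', ⟨by simp, by simp, ?_, ?_⟩, ?_⟩
          · rw [List.getLast?_cons_cons]; exact hl'
          · intro y hy
            rcases List.mem_cons.mp hy with rfl | hy
            · exact hc
            · exact hmem' y hy
          · rw [hh'] at hs'
            rw [pathStrength_cons D c b (e :: t') (by simp),
              pathStrength_cons D c b' (e' :: t'') (by simp), hh']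
            exact min_le_min (le_refl _) hs'
end SchulzeAux

namespace SchulzeAux
variable {C : Type*}

lemma mem_strengths {A : Set C} (D : C → C → ℤ) {c d : C} (hc : c ∈ A) (hd : d ∈ A) :
    D c d ∈ strengths A D c d := by
  refine ⟨[c, d], ⟨by simp, by simp, by simp, ?_⟩, pathStrength_pair D c d⟩
  intro y hy
  rcases List.mem_cons.mp hy with rfl | hy
  · exact hc
  · have : y = d := by simpa using hy
    subst this; exact hd

lemma strengths_bddAbove (V : List (Vote C)) (A : Set C) (c d : C) :
    BddAbove (strengths A (margin V) c d) := by
  refine ⟨(V.length : ℤ), ?_⟩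
  rintro s ⟨l, ⟨h2, _, _, _⟩, rfl⟩
  obtain ⟨a, b, hab⟩ := edge_exists h2
  exact le_trans (pathStrength_le_edge hab) (margin_le V a b)

lemma strengths_mono {A B : Set C} (h : A ⊆ B) (D : C → C → ℤ) (c d : C) :
    strengths A D c d ⊆ strengths B D c d := by
  rintro s ⟨l, ⟨h2, hh, hl, hm⟩, rfl⟩
  exact ⟨l, ⟨h2, hh, hl, fun y hy => h (hm y hy)⟩, rfl⟩

lemma sp_eq {x : C} {V : List (Vote C)}
    (hx : ∀ v ∈ V, ∀ c : C, c ≠ x → v.Prefers c x)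
    {c d : C} (hc : c ≠ x) (hd : d ≠ x) :
    strongestPath Set.univ (margin V) c d = strongestPath {y : C | y ≠ x} (margin V) c d := by
  apply le_antisymm
  · apply csSup_le ⟨_, mem_strengths _ (Set.mem_univ c) (Set.mem_univ d)⟩
    rintro s ⟨l, ⟨h2, hh, hl, _⟩, rfl⟩
    match l, h2, hh with
    | a :: t, h2, hh =>
      simp only [List.head?_cons, Option.some_inj] at hh
      rw [hh] at hl ⊢
      have hne : t ≠ [] := by
        intro h; rw [h] at h2; simp at h2
      obtain ⟨l', hp', hs'⟩ := elim_x (margin V) (margin_x_le hx) t.length t c d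
        (le_refl _) hne hl hc hd
      exact le_trans hs' (le_csSup (strengths_bddAbove V _ c d) ⟨l', hp', rfl⟩)
  · have hcA : c ∈ {y : C | y ≠ x} := hc
    have hdA : d ∈ {y : C | y ≠ x} := hd
    apply csSup_le ⟨_, mem_strengths (A := {y : C | y ≠ x}) (margin V) hcA hdA⟩
    intro s hs
    exact le_csSup (strengths_bddAbove V _ c d)
      (strengths_mono (fun y _ => Set.mem_univ y) _ c d hs)

lemma sp_cx_ge {x : C} {V : List (Vote C)}
    (hx : ∀ v ∈ V, ∀ c : C, c ≠ x → v.Prefers c x)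
    {c : C} (hc : c ≠ x) :
    (V.length : ℤ) ≤ strongestPath Set.univ (margin V) c x := by
  refine le_csSup (strengths_bddAbove V _ c x) ?_
  have := mem_strengths (A := (Set.univ : Set C)) (margin V)
    (Set.mem_univ c) (Set.mem_univ x)
  rwa [margin_cx hx hc] at this

lemma sp_xc_le {x : C} {V : List (Vote C)}
    (hx : ∀ v ∈ V, ∀ c : C, c ≠ x → v.Prefers c x)
    {c : C} (hc : c ≠ x) :
    strongestPath Set.univ (margin V) x c ≤ -(V.length : ℤ) := by
  apply csSup_le ⟨_, mem_strengths _ (Set.mem_univ x) (Set.mem_univ c)⟩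
  rintro s ⟨l, ⟨h2, hh, hl, _⟩, rfl⟩
  obtain ⟨b, hb, hmem⟩ := exists_departure l hh hl hc
  calc pathStrength (margin V) l ≤ margin V x b := pathStrength_le_edge hmem
    _ = -(V.length : ℤ) := margin_xc hx hb

end SchulzeAux



open SchulzeAux

/-- Schulze is insensitive to bottom-ranked candidates: if every vote ranks `x` strictly
below every other candidate, then the Schulze winners among the original candidates
(`≠ x`) are exactly the Schulze winners of the padded election that lie among the original
candidates; moreover `x` is never a Schulze winner of the padded election when there is at
least one voter (and at least one original candidate). -/
theorem schulze_insensitive_bottom {C : Type*} [Fintype C]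
    (x : C) (V : List (Vote C))
    (hx : ∀ v ∈ V, ∀ c : C, c ≠ x → v.Prefers c x)
    (hne : ∃ c : C, c ≠ x) :
    {c : C | SchulzeWinnerOn {y : C | y ≠ x} (margin V) c} =
      {c : C | SchulzeWinnerOn Set.univ (margin V) c} ∩ {y : C | y ≠ x} ∧
    (V ≠ [] → ¬ SchulzeWinnerOn Set.univ (margin V) x) := by
  constructor
  · ext c
    simp only [Set.mem_setOf_eq, Set.mem_inter_iff]
    constructor
    · rintro ⟨hcA, hwin⟩
      have hcx : c ≠ x := hcA
      refine ⟨⟨Set.mem_univ c, ?_⟩, hcx⟩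
      intro d _ hdc
      by_cases hdx : d = x
      · rw [hdx]
        have h1 : strongestPath Set.univ (margin V) x c ≤ -(V.length : ℤ) :=
          sp_xc_le hx hcx
        have h2 : (V.length : ℤ) ≤ strongestPath Set.univ (margin V) c x :=
          sp_cx_ge hx hcx
        have h3 : (0 : ℤ) ≤ V.length := Int.ofNat_nonneg _
        omega
      · rw [sp_eq hx hdx hcx, sp_eq hx hcx hdx]
        exact hwin d hdx hdc
    · rintro ⟨⟨_, hwin⟩, hcx⟩
      refine ⟨hcx, ?_⟩
      intro d hd hdc
      rw [← sp_eq hx hd hcx, ← sp_eq hx hcx hd]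
      exact hwin d (Set.mem_univ d) hdc
  · intro hV hw
    obtain ⟨c, hc⟩ := hne
    have h1 := hw.2 c (Set.mem_univ c) hc
    have h2 : (V.length : ℤ) ≤ strongestPath Set.univ (margin V) c x := sp_cx_ge hx hc
    have h3 : strongestPath Set.univ (margin V) x c ≤ -(V.length : ℤ) := sp_xc_le hx hc
    have h4 : 0 < V.length := List.length_pos_iff.mpr hV
    omega
end

section
/- For any voting rule E satisfying insensitivity to bottom-ranked candidates, constructive control by deleting candidates reduces to exact constructive control by replacing candidates: given an instance ((C,V),p,k) of CCDC, the instance obtained by adding k fresh candidates X = {x_1,…,x_k} and k fresh candidates D at the bottom of every vote (X above D) is a yes-instance of exact constructive control by replacing exactly k candidates if and only if ((C,V),p,k) is a yes-instance of CCDC. -/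
/-- For any IBC voting rule `E`, CCDC reduces to exact constructive control by replacing
candidates: padding the election with `k` fresh bottom-ranked candidates `X` (above `k`
fresh bottom-ranked candidates `Ds`) yields a yes-instance of exact replacing (delete
exactly `k` from `Cs ∪ X`, add exactly `k` from `Ds`) iff the CCDC instance is a
yes-instance. -/
theorem ccdc_to_exact_ccrc {C : Type*} [Fintype C] [DecidableEq C]
    (E : Finset C → List (Vote C) → Set C)
    (hIBC : ∀ (A : Finset C) (x : C) (V : List (Vote C)), x ∉ A →
      (∀ v ∈ V, ∀ a ∈ A, v.Prefers a x) → E (insert x A) V = E A V)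
    (Cs X Ds : Finset C) (p : C) (k : ℕ) (V : List (Vote C))
    (hp : p ∈ Cs)
    (hCX : Disjoint Cs X) (hCD : Disjoint Cs Ds) (hXD : Disjoint X Ds)
    (hX : X.card = k) (hD : Ds.card = k)
    (hbottom : ∀ v ∈ V,
      (∀ c ∈ Cs, ∀ x ∈ X ∪ Ds, v.Prefers c x) ∧
      (∀ x ∈ X, ∀ d ∈ Ds, v.Prefers x d))
    (hfixed : ∀ v ∈ V, ∀ v' ∈ V, ∀ a ∈ X ∪ Ds, ∀ b ∈ X ∪ Ds,
      (v.Prefers a b ↔ v'.Prefers a b)) :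
    (∃ S ⊆ Cs, p ∉ S ∧ S.card ≤ k ∧ p ∈ E (Cs \ S) V) ↔
    (∃ S ⊆ Cs ∪ X, ∃ D' ⊆ Ds, p ∉ S ∧ S.card = k ∧ D'.card = k ∧
      p ∈ E ((Cs ∪ X) \ S ∪ D') V) := by
  -- key lemma: adding any set of "bottom" candidates (from X ∪ Ds) doesn't change E
  have key : ∀ B : Finset C, B ⊆ X ∪ Ds → ∀ A : Finset C, A ⊆ Cs → E (A ∪ B) V = E A V := by
    intro B
    induction B using Finset.strongInduction with
    | _ B IH =>
      intro hB A hA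
      rcases B.eq_empty_or_nonempty with rfl | hBne
      · simp
      · obtain ⟨x, hxB, hxbot⟩ : ∃ x ∈ B, ∀ v ∈ V, ∀ b ∈ B, b ≠ x → v.Prefers b x := by
          by_cases hV : V = []
          · obtain ⟨x, hxB⟩ := hBne
            exact ⟨x, hxB, by simp [hV]⟩
          · obtain ⟨v0, hv0⟩ := List.exists_mem_of_ne_nil V hV
            obtain ⟨x, hxB, hmax⟩ := B.exists_max_image (fun b => v0.rk b) hBne
            refine ⟨x, hxB, ?_⟩
            intro v hv b hb hbx
            have h1 : v0.Prefers b x :=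
              lt_of_le_of_ne (hmax b hb) (fun h => hbx (v0.inj h))
            exact (hfixed v hv v0 hv0 b (hB hb) x (hB hxB)).mpr h1
        have hxXD : x ∈ X ∪ Ds := hB hxB
        have hxA : x ∉ A := by
          intro h
          have hc : x ∈ Cs := hA h
          rcases Finset.mem_union.mp hxXD with h' | h'
          · exact (Finset.disjoint_left.mp hCX hc) h'
          · exact (Finset.disjoint_left.mp hCD hc) h'
        have hxAE : x ∉ A ∪ B.erase x := by
          simp [hxA]
        have hstep := hIBC (A ∪ B.erase x) x V hxAE (by
          intro v hv a ha
          rcases Finset.mem_union.mp ha with h | h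
          · exact (hbottom v hv).1 a (hA h) x hxXD
          · exact hxbot v hv a (Finset.mem_of_mem_erase h) (Finset.ne_of_mem_erase h))
        have hins : insert x (A ∪ B.erase x) = A ∪ B := by
          rw [← Finset.union_insert, Finset.insert_erase hxB]
        rw [← hins, hstep,
          IH (B.erase x) (Finset.erase_ssubset hxB)
            ((Finset.erase_subset x B).trans hB) A hA]
  constructor
  · rintro ⟨S, hS, hpS, hcard, hpE⟩
    obtain ⟨T, hT, hTcard⟩ := Finset.exists_subset_card_eq (s := X) (n := k - S.card) (by rw [hX]; omega)
    have hdisjST : Disjoint S T :=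
      Finset.disjoint_left.mpr fun a ha hb =>
        Finset.disjoint_left.mp hCX (hS ha) (hT hb)
    refine ⟨S ∪ T, Finset.union_subset_union hS hT, Ds, subset_rfl, ?_, ?_, hD, ?_⟩
    · intro h
      rcases Finset.mem_union.mp h with h | h
      · exact hpS h
      · exact Finset.disjoint_left.mp hCX hp (hT h)
    · rw [Finset.card_union_of_disjoint hdisjST, hTcard]; omega
    · have hset : ((Cs ∪ X) \ (S ∪ T)) ∪ Ds = (Cs \ S) ∪ ((X \ T) ∪ Ds) := by
        ext a
        have h1 : a ∈ Cs → a ∉ T := fun h h' => Finset.disjoint_left.mp hCX h (hT h')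
        have h2 : a ∈ X → a ∉ S := fun h h' =>
          Finset.disjoint_left.mp hCX (hS h') h
        simp only [Finset.mem_union, Finset.mem_sdiff, not_or]
        tauto
      rw [hset, key ((X \ T) ∪ Ds)
        (Finset.union_subset_union Finset.sdiff_subset subset_rfl)
        (Cs \ S) Finset.sdiff_subset]
      exact hpE
  · rintro ⟨S, hS, D', hD', hpS, hScard, hD'card, hpE⟩
    refine ⟨S ∩ Cs, Finset.inter_subset_right, fun h => hpS (Finset.mem_of_mem_inter_left h),
      le_trans (Finset.card_le_card Finset.inter_subset_left) (le_of_eq hScard), ?_⟩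
    have hset : ((Cs ∪ X) \ S) ∪ D' = (Cs \ (S ∩ Cs)) ∪ ((X \ S) ∪ D') := by
      ext a
      simp only [Finset.mem_union, Finset.mem_sdiff, Finset.mem_inter, not_and, not_or]
      tauto
    rw [hset, key ((X \ S) ∪ D')
      (Finset.union_subset_union Finset.sdiff_subset hD')
      (Cs \ (S ∩ Cs)) Finset.sdiff_subset] at hpE
    exact hpE
end

section
/- In a weighted majority graph where the only positive margins are D(p,w) = a, D(b_j,p) = b for all j ∈ {1,…,m}, and D(w,b_j) = c for all j with c > b > a > 0, deleting no candidates gives P(w,p) = b > a = P(p,w) (via the path w → b_j → p), but each strongest path from w to p passes through some b_j; hence if X ⊆ {b_1,…,b_m} is removed with X ≠ {b_1,…,b_m}, still P(w,p) = b, and if all b_j are removed then P(w,p) = 0 < a = P(p,w). -/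
/-- Strengths of paths from `c` to `d` within `A` all of whose edges have positive margin. -/
def strengthsPos {C : Type*} (A : Set C) (D : C → C → ℤ) (c d : C) : Set ℤ :=
  {s | ∃ l : List C, IsPathOn A c d l ∧ (∀ e ∈ l.zip l.tail, 0 < D e.1 e.2) ∧
    pathStrength D l = s}

/-- Strongest positive-strength path, with the convention that the value is `0` if no
positive-strength path exists. -/
noncomputable def strongestPosPath {C : Type*} (A : Set C) (D : C → C → ℤ) (c d : C) : ℤ :=
  sSup (insert 0 (strengthsPos A D c d))

section Aux

variable {C : Type*}

lemma min?_getD_le {l : List ℤ} {a : ℤ} (h : a ∈ l) : l.min?.getD 0 ≤ a := by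
  have hne : l ≠ [] := List.ne_nil_of_mem h
  obtain ⟨m, hm⟩ : ∃ m, l.min? = some m := by
    cases hmin : l.min? with
    | none => exact absurd (List.min?_eq_none_iff.mp hmin) hne
    | some m => exact ⟨m, rfl⟩
  rw [hm]
  have := List.min?_eq_some_iff.mp hm
  exact this.2 a h

lemma pathStrength_le_edge (D : C → C → ℤ) {l : List C} {e : C × C}
    (he : e ∈ l.zip l.tail) : pathStrength D l ≤ D e.1 e.2 := by
  apply min?_getD_le
  exact List.mem_map_of_mem he

lemma edge_into_last : ∀ (l : List C), 2 ≤ l.length → ∀ d, l.getLast? = some d →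
    ∃ x, (x, d) ∈ l.zip l.tail := by
  intro l
  induction l with
  | nil => intro h; simp at h
  | cons a t ih =>
    intro hlen d hd
    match t with
    | [] => simp at hlen
    | b :: t' =>
      match t' with
      | [] =>
        simp [List.getLast?] at hd
        exact ⟨a, by simp [hd]⟩
      | c :: t'' =>
        have hlen' : 2 ≤ (b :: c :: t'').length := by simp
        have hd' : (b :: c :: t'').getLast? = some d := by
          rw [← hd]; rfl
        obtain ⟨x, hx⟩ := ih hlen' d hd'
        refine ⟨x, ?_⟩
        rw [List.tail_cons] at hx ⊢
        rw [List.zip_cons_cons]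
        exact List.mem_cons_of_mem _ hx

lemma sSup_insert0_eq {S : Set ℤ} {v : ℤ} (hv : v ∈ insert 0 S)
    (hub : ∀ s ∈ insert 0 S, s ≤ v) : sSup (insert 0 S) = v :=
  le_antisymm (csSup_le ⟨0, Set.mem_insert 0 S⟩ hub) (le_csSup ⟨v, hub⟩ hv)

end Aux

/-- In a WMG on `{p, w} ∪ B` whose only positive margins are `D(p,w) = a`, `D(b,p) = b₀`
and `D(w,b) = c₀` for all `b ∈ B`, with `c₀ > b₀ > a > 0`: without deletions
`P(w,p) = b₀ > a = P(p,w)` (via paths `w → b → p`); every strongest path from `w` to `p`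
passes through `B`, so removing any proper subset `X ⊊ B` leaves `P(w,p) = b₀`, while
removing all of `B` gives `P(w,p) = 0 < a = P(p,w)`. -/

theorem strongest_paths_through_B {C : Type*} [Fintype C] [DecidableEq C]
    (p w : C) (hpw : p ≠ w)
    (Bs : Set C) (hBs : Bs = {x : C | x ≠ p ∧ x ≠ w}) (hBne : Bs.Nonempty)
    (a b₀ c₀ : ℤ) (ha : 0 < a) (hab : a < b₀) (hbc : b₀ < c₀)
    (D : C → C → ℤ)
    (hskew : ∀ x y : C, D x y = - D y x)
    (hpwD : D p w = a)
    (hbp : ∀ x ∈ Bs, D x p = b₀)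
    (hwb : ∀ x ∈ Bs, D w x = c₀)
    (hbb : ∀ x ∈ Bs, ∀ y ∈ Bs, D x y = 0) :
    strongestPosPath Set.univ D w p = b₀ ∧
    strongestPosPath Set.univ D p w = a ∧
    a < b₀ ∧
    (∀ X : Set C, X ⊆ Bs → X ≠ Bs → strongestPosPath (Set.univ \ X) D w p = b₀) ∧
    strongestPosPath (Set.univ \ Bs) D w p = 0 ∧
    strongestPosPath (Set.univ \ Bs) D p w = a := by
  -- basic facts
  have hDpp : D p p = 0 := by have := hskew p p; omega
  have hDww : D w w = 0 := by have := hskew w w; omega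
  have hDwp : D w p = -a := by have := hskew p w; omega
  have hDbw : ∀ x ∈ Bs, D x w = -c₀ := by
    intro x hx; have := hskew w x; have := hwb x hx; omega
  have tricho : ∀ x : C, x = p ∨ x = w ∨ x ∈ Bs := by
    intro x
    by_cases h1 : x = p
    · exact Or.inl h1
    by_cases h2 : x = w
    · exact Or.inr (Or.inl h2)
    · exact Or.inr (Or.inr (by rw [hBs]; exact ⟨h1, h2⟩))
  have hb0pos : (0:ℤ) < b₀ := lt_trans ha hab
  -- upper bound: any positive path from w to p has strength ≤ b₀ (in any A)
  have ubwp : ∀ (A : Set C), ∀ s ∈ strengthsPos A D w p, s ≤ b₀ := by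
    rintro A s ⟨l, ⟨hlen, _, hlast, _⟩, hpos, rfl⟩
    obtain ⟨x, hx⟩ := edge_into_last l hlen p hlast
    have hle := pathStrength_le_edge D hx
    have hxp := hpos _ hx
    simp only at hle hxp
    rcases tricho x with h | h | h
    · rw [h, hDpp] at hxp; omega
    · rw [h, hDwp] at hxp; omega
    · rw [hbp x h] at hle; exact hle
  -- upper bound: any positive path from p to w has strength ≤ a (in any A)
  have ubpw : ∀ (A : Set C), ∀ s ∈ strengthsPos A D p w, s ≤ a := by
    rintro A s ⟨l, ⟨hlen, _, hlast, _⟩, hpos, rfl⟩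
    obtain ⟨x, hx⟩ := edge_into_last l hlen w hlast
    have hle := pathStrength_le_edge D hx
    have hxp := hpos _ hx
    simp only at hle hxp
    rcases tricho x with h | h | h
    · rw [h, hpwD] at hle; exact hle
    · rw [h, hDww] at hxp; omega
    · rw [hDbw x h] at hxp; omega
  -- the path [w, x, p] for x ∈ Bs gives strength b₀
  have memwp : ∀ (A : Set C), ∀ x ∈ Bs, w ∈ A → x ∈ A → p ∈ A →
      b₀ ∈ strengthsPos A D w p := by
    intro A x hx hwA hxA hpA
    refine ⟨[w, x, p], ⟨by simp, by simp, by simp, ?_⟩, ?_, ?_⟩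
    · intro y hy
      simp only [List.mem_cons, List.not_mem_nil, or_false] at hy
      rcases hy with rfl | rfl | rfl <;> assumption
    · intro e he
      simp only [List.zip_cons_cons, List.tail_cons, List.zip_nil_right,
        List.mem_cons, List.not_mem_nil, or_false] at he
      rcases he with rfl | rfl
      · simp [hwb x hx]; omega
      · simp [hbp x hx]; omega
    · show (([(w,x),(x,p)].map fun e => D e.1 e.2).min?).getD 0 = b₀
      simp [hwb x hx, hbp x hx, min_def]
      omega
  -- the path [p, w] gives strength a
  have mempw : ∀ (A : Set C), p ∈ A → w ∈ A → a ∈ strengthsPos A D p w := by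
    intro A hpA hwA
    refine ⟨[p, w], ⟨by simp, by simp, by simp, ?_⟩, ?_, ?_⟩
    · intro y hy
      simp only [List.mem_cons, List.not_mem_nil, or_false] at hy
      rcases hy with rfl | rfl <;> assumption
    · intro e he
      simp only [List.zip_cons_cons, List.tail_cons, List.zip_nil_right,
        List.mem_cons, List.not_mem_nil, or_false] at he
      rcases he with rfl
      simpa [hpwD] using ha
    · show (([(p,w)].map fun e => D e.1 e.2).min?).getD 0 = a
      simp [hpwD]
  have hpnB : p ∉ Bs := by rw [hBs]; simp
  have hwnB : w ∉ Bs := by rw [hBs]; simp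
  obtain ⟨x₀, hx₀⟩ := hBne
  refine ⟨?_, ?_, hab, ?_, ?_, ?_⟩
  · -- P_univ(w,p) = b₀
    apply sSup_insert0_eq
    · exact Set.mem_insert_of_mem _ (memwp _ x₀ hx₀ trivial trivial trivial)
    · rintro s (rfl | hs)
      · omega
      · exact ubwp _ s hs
  · -- P_univ(p,w) = a
    apply sSup_insert0_eq
    · exact Set.mem_insert_of_mem _ (mempw _ trivial trivial)
    · rintro s (rfl | hs)
      · omega
      · exact ubpw _ s hs
  · -- proper subset removal
    intro X hXB hXne
    obtain ⟨x, hxB, hxX⟩ := Set.exists_of_ssubset (hXB.ssubset_of_ne hXne)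
    apply sSup_insert0_eq
    · refine Set.mem_insert_of_mem _ (memwp _ x hxB ⟨trivial, ?_⟩ ⟨trivial, hxX⟩
        ⟨trivial, ?_⟩)
      · exact fun h => hwnB (hXB h)
      · exact fun h => hpnB (hXB h)
    · rintro s (rfl | hs)
      · omega
      · exact ubwp _ s hs
  · -- all of Bs removed: P(w,p) = 0
    have hemp : strengthsPos (Set.univ \ Bs) D w p = ∅ := by
      ext s
      simp only [Set.mem_empty_iff_false, iff_false]
      rintro ⟨l, ⟨hlen, _, hlast, hmem⟩, hpos, rfl⟩
      obtain ⟨x, hx⟩ := edge_into_last l hlen p hlast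
      have hxp := hpos _ hx
      have hxl : x ∈ l := (List.of_mem_zip hx).1
      have hxA := hmem x hxl
      simp only at hxp
      rcases tricho x with h | h | h
      · rw [h, hDpp] at hxp; omega
      · rw [h, hDwp] at hxp; omega
      · exact hxA.2 h
    rw [strongestPosPath, hemp]
    simp
  · -- all of Bs removed: P(p,w) = a
    apply sSup_insert0_eq
    · exact Set.mem_insert_of_mem _ (mempw _ ⟨trivial, hpnB⟩ ⟨trivial, hwnB⟩)
    · rintro s (rfl | hs)
      · omega
      · exact ubpw _ s hs
end

section
/- In the ranked pairs procedure with a fixed tie-breaking order, the resulting directed graph is acyclic, and (for a nonempty finite candidate set) it has at least one source; thus a ranked pairs winner always exists. -/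
/-- A digraph (given as a finite edge set) has a cycle if some vertex reaches itself via a
nonempty directed walk. -/
def HasCycle {C : Type*} (G : Finset (C × C)) : Prop :=
  ∃ a : C, Relation.TransGen (fun x y => (x, y) ∈ G) a a

open Classical in
/-- One step of the ranked pairs procedure: add the edge unless it creates a cycle. -/
noncomputable def rpStep {C : Type*} [DecidableEq C] (G : Finset (C × C)) (e : C × C) :
    Finset (C × C) :=
  if HasCycle (insert e G) then G else insert e G

/-- The final ranked pairs graph obtained by processing the list of pairs in order. -/
noncomputable def rpGraph {C : Type*} [DecidableEq C] (L : List (C × C)) : Finset (C × C) :=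
  L.foldl rpStep ∅

/-- For any processing order `L` listing every ordered pair of distinct candidates exactly
once, sorted by nonincreasing margin (ties broken by the fixed order in which they appear
in `L`), the ranked pairs graph is acyclic and, for a nonempty finite candidate set, has a
source; thus a ranked pairs winner always exists. -/
theorem ranked_pairs_acyclic_and_has_source {C : Type*} [Fintype C] [DecidableEq C]
    (D : C → C → ℤ) (L : List (C × C))
    (hmem : ∀ a b : C, a ≠ b → (a, b) ∈ L)
    (hnodup : L.Nodup)
    (hdistinct : ∀ e ∈ L, e.1 ≠ e.2)
    (hsorted : L.Pairwise (fun e f => D f.1 f.2 ≤ D e.1 e.2)) :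
    ¬ HasCycle (rpGraph L) ∧
    (Nonempty C → ∃ c : C, ∀ d : C, (d, c) ∉ rpGraph L) := by
  have key : ∀ (M : List (C × C)) (G : Finset (C × C)),
      ¬ HasCycle G → ¬ HasCycle (M.foldl rpStep G) := by
    intro M
    induction M with
    | nil => intro G h; exact h
    | cons e M ih =>
      intro G h
      simp only [List.foldl_cons]
      apply ih
      unfold rpStep
      split
      · exact h
      · assumption
  have hacyc : ¬ HasCycle (rpGraph L) := by
    apply key
    rintro ⟨a, h⟩
    cases h with
    | single h => simp at h
    | tail _ h => simp at h
  refine ⟨hacyc, ?_⟩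
  rintro ⟨c0⟩
  set r := Relation.TransGen (fun x y : C => (x, y) ∈ rpGraph L) with hr
  haveI : IsIrrefl C r := ⟨fun a h => hacyc ⟨a, h⟩⟩
  haveI : IsTrans C r := ⟨fun _ _ _ h1 h2 => h1.trans h2⟩
  have wf : WellFounded r := Finite.wellFounded_of_trans_of_irrefl r
  obtain ⟨c, -, hc⟩ := wf.has_min Set.univ ⟨c0, trivial⟩
  exact ⟨c, fun d hd => hc d trivial (Relation.TransGen.single hd)⟩
end
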